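/- Suppose P^b is in addition positive definite. Then the solution of the Riccati ODE dP/ds = − P Hᵀ R⁻¹ H P with P(0) = P^b satisfies, at pseudo-time s = 1, P(1) = ((P^b)⁻¹ + Hᵀ R⁻¹ H)⁻¹; that is, integrating the Kalman–Bucy covariance equation over the unit pseudo-time interval reproduces the discrete Kalman filter analysis covariance P^a. -/

import Mathlib

open Matrix Set

attribute [local instance] Matrix.normedAddCommGroup Matrix.normedSpace

section aux

variable {N : ℕ}

local notation "E" => Matrix (Fin N) (Fin N) ℝ

/-- Left multiplication as a continuous linear map, bundled twice. -/
noncomputable def mulLCLM : E →L[ℝ] E →L[ℝ] E :=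
  LinearMap.toContinuousLinearMap
  { toFun := fun a => LinearMap.toContinuousLinearMap (LinearMap.mulLeft ℝ a)
    map_add' := by intro a b; ext x; simp [add_mul]
    map_smul' := by intro c a; ext x; simp [smul_mul_assoc] }

@[simp] lemma mulLCLM_apply (a b : E) : mulLCLM a b = a * b := rfl

/-- Right multiplication as a continuous linear map, bundled twice. -/
noncomputable def mulRCLM : E →L[ℝ] E →L[ℝ] E :=
  LinearMap.toContinuousLinearMap
  { toFun := fun a => LinearMap.toContinuousLinearMap (LinearMap.mulRight ℝ a)
    map_add' := by intro a b; ext x; simp [mul_add]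
    map_smul' := by intro c a; ext x; simp [mul_smul_comm] }

@[simp] lemma mulRCLM_apply (a b : E) : mulRCLM a b = b * a := rfl

noncomputable instance matCLMNormedAddCommGroup : NormedAddCommGroup (E →L[ℝ] E) :=
  ContinuousLinearMap.toNormedAddCommGroup

noncomputable instance matCLMNormedSpace : NormedSpace ℝ (E →L[ℝ] E) :=
  ContinuousLinearMap.toNormedSpace

lemma HasDerivWithinAt.matMul {f g : ℝ → E} {f' g' : E} {s : Set ℝ} {x : ℝ}
    (hf : HasDerivWithinAt f f' s x) (hg : HasDerivWithinAt g g' s x) :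
    HasDerivWithinAt (fun t => f t * g t) (f' * g x + f x * g') s x := by
  have h := ((mulLCLM.hasFDerivAt.comp_hasDerivWithinAt x hf).clm_apply hg :)
  exact h

end aux

/-- If `P^b` is positive definite, any solution of the Riccati ODE
`dP/ds = − P Hᵀ R⁻¹ H P` on `[0,1]` with `P(0) = P^b` satisfies, at pseudo-time `s = 1`,
`P(1) = ((P^b)⁻¹ + Hᵀ * R⁻¹ * H)⁻¹`, the discrete Kalman filter analysis covariance. -/
theorem stmt_4 {N L : ℕ}
    (Pb : Matrix (Fin N) (Fin N) ℝ) (H : Matrix (Fin L) (Fin N) ℝ)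
    (R : Matrix (Fin L) (Fin L) ℝ)
    (hPb : Pb.PosDef) (hR : R.PosDef)
    (P : ℝ → Matrix (Fin N) (Fin N) ℝ)
    (hP : ∀ s ∈ Set.Icc (0:ℝ) 1,
      HasDerivWithinAt P (-(P s * Hᵀ * R⁻¹ * H * P s)) (Set.Icc 0 1) s)
    (hP0 : P 0 = Pb) :
    P 1 = (Pb⁻¹ + Hᵀ * R⁻¹ * H)⁻¹ := by
  set A : Matrix (Fin N) (Fin N) ℝ := Hᵀ * R⁻¹ * H with hA
  -- continuity of P on [0,1]
  have hPc : ContinuousOn P (Icc (0:ℝ) 1) := fun s hs => (hP s hs).continuousWithinAt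
  -- clamp to [0,1]
  set c : ℝ → ℝ := fun t => max 0 (min 1 t) with hc
  have hcmem : ∀ t, c t ∈ Icc (0:ℝ) 1 := fun t =>
    ⟨le_max_left _ _, max_le zero_le_one (min_le_left _ _)⟩
  have hceq : ∀ t ∈ Icc (0:ℝ) 1, c t = t := fun t ht => by
    simp [hc, min_eq_right ht.2, max_eq_right ht.1]
  set B : ℝ → Matrix (Fin N) (Fin N) ℝ := fun s => -(A * P s) with hB
  have hBc : ContinuousOn B (Icc (0:ℝ) 1) := (continuousOn_const.mul hPc).neg
  -- uniform Lipschitz bound for right multiplication by `B (c t)`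
  obtain ⟨M, hM⟩ := isCompact_Icc.exists_bound_of_continuousOn
    ((mulRCLM.continuous.comp_continuousOn hBc) :
      ContinuousOn (fun s => mulRCLM (B s)) (Icc (0:ℝ) 1))
  set v : ℝ → Matrix (Fin N) (Fin N) ℝ → Matrix (Fin N) (Fin N) ℝ :=
    fun t y => y * B (c t) with hv
  have hlip : ∀ t, LipschitzWith M.toNNReal (v t) := by
    intro t
    have h1 : v t = ⇑(mulRCLM (B (c t))) := by funext y; simp [hv]
    rw [h1]
    refine (mulRCLM (B (c t))).lipschitz.weaken ?_
    have hMt := Real.toNNReal_mono (hM _ (hcmem t))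
    rw [norm_toNNReal] at hMt
    exact hMt
  -- the candidate inverse
  set Q : ℝ → Matrix (Fin N) (Fin N) ℝ := fun s => Pb⁻¹ + s • A with hQ
  have hQ' : ∀ s : ℝ, HasDerivWithinAt Q A (Icc (0:ℝ) 1) s := by
    intro s
    have h : HasDerivAt (fun u : ℝ => Pb⁻¹ + u • A) ((1:ℝ) • A) s :=
      (((hasDerivAt_id s).smul_const A).const_add Pb⁻¹)
    rw [one_smul] at h
    exact h.hasDerivWithinAt
  set f : ℝ → Matrix (Fin N) (Fin N) ℝ := fun s => Q s * P s - 1 with hf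
  have hfc : ContinuousOn f (Icc (0:ℝ) 1) := by
    refine ContinuousOn.sub ?_ continuousOn_const
    exact ((continuous_const.add (continuous_id.smul continuous_const)).continuousOn).mul hPc
  have hf' : ∀ t ∈ Ico (0:ℝ) 1, HasDerivWithinAt f (v t (f t)) (Ici t) t := by
    intro t ht
    have ht' : t ∈ Icc (0:ℝ) 1 := ⟨ht.1, ht.2.le⟩
    have hd : HasDerivWithinAt f
        (A * P t + Q t * (-(P t * Hᵀ * R⁻¹ * H * P t))) (Icc (0:ℝ) 1) t :=
      ((hQ' t).matMul (hP t ht')).sub_const 1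
    have heq : A * P t + Q t * (-(P t * Hᵀ * R⁻¹ * H * P t)) = v t (f t) := by
      have hassoc : P t * Hᵀ * R⁻¹ * H * P t = P t * (Hᵀ * R⁻¹ * H * P t) := by
        simp only [Matrix.mul_assoc]
      simp only [hv, hf, hB, hceq t ht', hA, hassoc]
      noncomm_ring
    rw [heq] at hd
    exact hd.mono_of_mem_nhdsWithin (Icc_mem_nhdsGE_of_mem ht)
  have hg' : ∀ t ∈ Ico (0:ℝ) 1,
      HasDerivWithinAt (fun _ : ℝ => (0 : Matrix (Fin N) (Fin N) ℝ))
        (v t 0) (Ici t) t := by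
    intro t ht
    have : v t 0 = 0 := by simp [hv]
    rw [this]
    exact hasDerivWithinAt_const _ _ _
  have hdet : IsUnit Pb.det := isUnit_iff_ne_zero.2 hPb.det_pos.ne'
  have hf0 : f 0 = 0 := by
    simp [hf, hQ, hP0, Matrix.nonsing_inv_mul Pb hdet]
  have huniq := ODE_solution_unique (v := v) (K := M.toNNReal) hlip hfc hf'
    continuousOn_const hg' hf0
  have hone : f 1 = 0 := huniq (right_mem_Icc.2 zero_le_one)
  have hQ1 : (Pb⁻¹ + A) * P 1 = 1 := by
    have : Q 1 * P 1 - 1 = 0 := hone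
    have h2 : Q 1 * P 1 = 1 := by linear_combination (norm := module) this
    simpa [hQ] using h2
  exact (Matrix.inv_eq_right_inv hQ1).symm
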